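/- Approximate intertwining for B1: Let S = (ψ, A0, A1, B0, B1) be a CHSH strategy on finite-dimensional complex inner product spaces H_A, H_B with bias β(S) ≥ 2√2 − ε for some ε ≥ 0. Let V_B : H_B → ℂ² ⊗ H_B be the Bob extractor: V_B(v) := U_B(|aux⟩ ⊗ v) with U_B := (R ⊗ I) ∘ control(B1) ∘ (Had ⊗ I) ∘ control(B0) ∘ (Had ⊗ I) ∘ (R† ⊗ I), R := sin(π/8)·X + cos(π/8)·Z, |aux⟩ := R|0⟩. Then ‖(I ⊗ ((H' ⊗ I) ∘ V_B − V_B ∘ B1)) ψ‖ ≤ √(c·ε), where c := 128√2 and H' := (Z−X)/√2. -/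

import Mathlib

set_option maxHeartbeats 1000000
set_option synthInstance.maxHeartbeats 400000
set_option synthInstance.maxSize 2048

noncomputable section

open scoped TensorProduct
open Module

/-! ## The canonical inner product space structure on tensor products -/

section TensorInner

variable (E F : Type*) [NormedAddCommGroup E] [InnerProductSpace ℂ E] [FiniteDimensional ℂ E]
  [NormedAddCommGroup F] [InnerProductSpace ℂ F] [FiniteDimensional ℂ F]

/-- Coordinate representation of `E ⊗[ℂ] F` with respect to the tensor product of
orthonormal bases of `E` and `F`. -/
def tensorRepr : (E ⊗[ℂ] F) ≃ₗ[ℂ]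
    EuclideanSpace ℂ (Fin (finrank ℂ E) × Fin (finrank ℂ F)) :=
  (((stdOrthonormalBasis ℂ E).toBasis.tensorProduct
      (stdOrthonormalBasis ℂ F).toBasis).equivFun).trans
    (WithLp.linearEquiv 2 ℂ ((Fin (finrank ℂ E) × Fin (finrank ℂ F)) → ℂ)).symm

/-- The canonical inner product on the tensor product of two finite-dimensional complex
inner product spaces; it satisfies `⟪a ⊗ b, c ⊗ d⟫ = ⟪a, c⟫ * ⟪b, d⟫`. -/
def tensorCore : InnerProductSpace.Core ℂ (E ⊗[ℂ] F) where
  inner x y := inner ℂ (tensorRepr E F x) (tensorRepr E F y)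
  conj_inner_symm x y := inner_conj_symm (𝕜 := ℂ) (tensorRepr E F x) (tensorRepr E F y)
  re_inner_nonneg x := inner_self_nonneg (𝕜 := ℂ) (x := tensorRepr E F x)
  add_left x y z := by simp [map_add, inner_add_left]
  smul_left x y r := by simp [map_smul, inner_smul_left, mul_comm]
  definite x h := by
    have h0 : tensorRepr E F x = 0 := inner_self_eq_zero.mp h
    simpa using (LinearEquiv.map_eq_zero_iff _).mp h0

noncomputable instance tensorNormedAddCommGroup : NormedAddCommGroup (E ⊗[ℂ] F) :=
  (tensorCore E F).toNormedAddCommGroup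

noncomputable instance tensorInnerProductSpace : InnerProductSpace ℂ (E ⊗[ℂ] F) :=
  InnerProductSpace.ofCore (tensorCore E F).toCore

end TensorInner

notation "⟪" x ", " y "⟫" => (inner (𝕜 := ℂ) x y)

/-! ## Qubits, standard states and gates -/

/-- The qubit space `ℂ²`. -/
abbrev Qubit := EuclideanSpace ℂ (Fin 2)

/-- The standard basis state `|0⟩`. -/
def ket0 : Qubit := EuclideanSpace.single 0 1

/-- The standard basis state `|1⟩`. -/
def ket1 : Qubit := EuclideanSpace.single 1 1

/-- The rank-one operator `|a⟩⟨b|` on an inner product space. -/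
def ketbra {H : Type*} [NormedAddCommGroup H] [InnerProductSpace ℂ H] (a b : H) :
    H →ₗ[ℂ] H where
  toFun v := (inner ℂ b v : ℂ) • a
  map_add' u v := by simp [inner_add_right, add_smul]
  map_smul' c v := by simp [inner_smul_right, smul_smul]

/-- The projector `|0⟩⟨0|`. -/
def proj0 : Qubit →ₗ[ℂ] Qubit := ketbra ket0 ket0

/-- The projector `|1⟩⟨1|`. -/
def proj1 : Qubit →ₗ[ℂ] Qubit := ketbra ket1 ket1

/-- The Pauli operator `σ_z = |0⟩⟨0| - |1⟩⟨1|`. -/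
def pauliZ : Qubit →ₗ[ℂ] Qubit := ketbra ket0 ket0 - ketbra ket1 ket1

/-- The Pauli operator `σ_x = |0⟩⟨1| + |1⟩⟨0|`. -/
def pauliX : Qubit →ₗ[ℂ] Qubit := ketbra ket0 ket1 + ketbra ket1 ket0

/-- The Hadamard gate `H = (Z + X)/√2`. -/
def Hadamard : Qubit →ₗ[ℂ] Qubit := ((Real.sqrt 2 : ℂ))⁻¹ • (pauliZ + pauliX)

/-- The reflected Hadamard gate `H' = (Z - X)/√2`. -/
def HadamardPrime : Qubit →ₗ[ℂ] Qubit := ((Real.sqrt 2 : ℂ))⁻¹ • (pauliZ - pauliX)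

/-- The rotation `R = sin(π/8)·X + cos(π/8)·Z`, satisfying `RZR† = H`, `RXR† = H'`. -/
def Rotation : Qubit →ₗ[ℂ] Qubit :=
  (Real.sin (Real.pi / 8) : ℂ) • pauliX + (Real.cos (Real.pi / 8) : ℂ) • pauliZ

/-! ## Bell states -/

/-- The Bell state `|Φ+⟩ = (|00⟩ + |11⟩)/√2`. -/
def bellPhiPlus : Qubit ⊗[ℂ] Qubit :=
  ((Real.sqrt 2 : ℂ))⁻¹ • (ket0 ⊗ₜ[ℂ] ket0 + ket1 ⊗ₜ[ℂ] ket1)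

/-- The Bell state `|Φ−⟩ = (|00⟩ − |11⟩)/√2`. -/
def bellPhiMinus : Qubit ⊗[ℂ] Qubit :=
  ((Real.sqrt 2 : ℂ))⁻¹ • (ket0 ⊗ₜ[ℂ] ket0 - ket1 ⊗ₜ[ℂ] ket1)

/-- The Bell state `|Ψ+⟩ = (|01⟩ + |10⟩)/√2`. -/
def bellPsiPlus : Qubit ⊗[ℂ] Qubit :=
  ((Real.sqrt 2 : ℂ))⁻¹ • (ket0 ⊗ₜ[ℂ] ket1 + ket1 ⊗ₜ[ℂ] ket0)

/-- The Bell state `|Ψ−⟩ = (|01⟩ − |10⟩)/√2`. -/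
def bellPsiMinus : Qubit ⊗[ℂ] Qubit :=
  ((Real.sqrt 2 : ℂ))⁻¹ • (ket0 ⊗ₜ[ℂ] ket1 - ket1 ⊗ₜ[ℂ] ket0)

/-! ## Binary observables and CHSH strategies -/

/-- A binary observable: a symmetric (self-adjoint) involution. -/
structure IsBinaryObservable {H : Type*} [NormedAddCommGroup H] [InnerProductSpace ℂ H]
    (A : H →ₗ[ℂ] H) : Prop where
  symm : A.IsSymmetric
  sq_one : A ∘ₗ A = LinearMap.id

variable {H_A H_B : Type*}
  [NormedAddCommGroup H_A] [InnerProductSpace ℂ H_A] [FiniteDimensional ℂ H_A]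
  [NormedAddCommGroup H_B] [InnerProductSpace ℂ H_B] [FiniteDimensional ℂ H_B]

/-- A CHSH strategy: a shared unit state together with two binary observables per party. -/
structure CHSHStrategy (H_A H_B : Type*)
    [NormedAddCommGroup H_A] [InnerProductSpace ℂ H_A] [FiniteDimensional ℂ H_A]
    [NormedAddCommGroup H_B] [InnerProductSpace ℂ H_B] [FiniteDimensional ℂ H_B] where
  psi : H_A ⊗[ℂ] H_B
  psi_norm : ‖psi‖ = 1
  A0 : H_A →ₗ[ℂ] H_A
  A1 : H_A →ₗ[ℂ] H_A
  B0 : H_B →ₗ[ℂ] H_B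
  B1 : H_B →ₗ[ℂ] H_B
  A0_bin : IsBinaryObservable A0
  A1_bin : IsBinaryObservable A1
  B0_bin : IsBinaryObservable B0
  B1_bin : IsBinaryObservable B1

/-- The general CHSH operator `A0⊗B0 + A0⊗B1 + A1⊗B0 − A1⊗B1`. -/
def CHSH_op (A0 A1 : H_A →ₗ[ℂ] H_A) (B0 B1 : H_B →ₗ[ℂ] H_B) :
    H_A ⊗[ℂ] H_B →ₗ[ℂ] H_A ⊗[ℂ] H_B :=
  TensorProduct.map A0 B0 + TensorProduct.map A0 B1 +
    TensorProduct.map A1 B0 - TensorProduct.map A1 B1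

/-- The CHSH bias `β(S) = Re⟨ψ, CHSH ψ⟩` of a strategy. -/
def chshBias (S : CHSHStrategy H_A H_B) : ℝ :=
  (⟪S.psi, (CHSH_op S.A0 S.A1 S.B0 S.B1) S.psi⟫).re

/-- Alice's observable acting on the shared state. -/
def applyAlice (A : H_A →ₗ[ℂ] H_A) : H_A ⊗[ℂ] H_B →ₗ[ℂ] H_A ⊗[ℂ] H_B :=
  TensorProduct.map A LinearMap.id

/-- Bob's observable acting on the shared state. -/
def applyBob (B : H_B →ₗ[ℂ] H_B) : H_A ⊗[ℂ] H_B →ₗ[ℂ] H_A ⊗[ℂ] H_B :=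
  TensorProduct.map LinearMap.id B

/-! ## The extraction circuit -/

variable {H : Type*} [NormedAddCommGroup H] [InnerProductSpace ℂ H] [FiniteDimensional ℂ H]

/-- Ancilla embedding `v ↦ |aux⟩ ⊗ v`. -/
def embed (aux : Qubit) : H →ₗ[ℂ] (Qubit ⊗[ℂ] H) :=
  (TensorProduct.mk ℂ Qubit H) aux

/-- Controlled gate `|0⟩⟨0| ⊗ I + |1⟩⟨1| ⊗ A`. -/
def controlGate (A : H →ₗ[ℂ] H) : (Qubit ⊗[ℂ] H) →ₗ[ℂ] (Qubit ⊗[ℂ] H) :=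
  TensorProduct.map proj0 (LinearMap.id : H →ₗ[ℂ] H) + TensorProduct.map proj1 A

/-- The extraction unitary `U_A = C_{A1}(H ⊗ I)C_{A0}(H ⊗ I)`. -/
def unitaryUA (A0 A1 : H →ₗ[ℂ] H) : (Qubit ⊗[ℂ] H) →ₗ[ℂ] (Qubit ⊗[ℂ] H) :=
  (controlGate A1) ∘ₗ (TensorProduct.map Hadamard LinearMap.id) ∘ₗ
    (controlGate A0) ∘ₗ (TensorProduct.map Hadamard LinearMap.id)

/-- Alice's extractor `V_A = U_A (|0⟩ ⊗ ·)`. -/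
def VA (A0 A1 : H →ₗ[ℂ] H) : H →ₗ[ℂ] (Qubit ⊗[ℂ] H) :=
  (unitaryUA A0 A1) ∘ₗ (embed ket0)

/-- Bob's rotated extraction unitary `U_B = (R ⊗ I) U_A(B0,B1) (R† ⊗ I)`. -/
def unitaryUB (B0 B1 : H →ₗ[ℂ] H) : (Qubit ⊗[ℂ] H) →ₗ[ℂ] (Qubit ⊗[ℂ] H) :=
  (TensorProduct.map Rotation LinearMap.id) ∘ₗ (unitaryUA B0 B1) ∘ₗ
    (TensorProduct.map (LinearMap.adjoint Rotation) LinearMap.id)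

/-- Bob's rotated ancilla `|aux⟩ = R|0⟩`. -/
def auxState : Qubit := Rotation ket0

/-- Bob's extractor `V_B = U_B (|aux⟩ ⊗ ·)`. -/
def VB (B0 B1 : H →ₗ[ℂ] H) : H →ₗ[ℂ] (Qubit ⊗[ℂ] H) :=
  (unitaryUB B0 B1) ∘ₗ (embed auxState)

/-! ## Tensor regrouping -/

/-- The canonical regrouping isomorphism
`(ℂ² ⊗ H_A) ⊗ (ℂ² ⊗ H_B) ≃ (ℂ² ⊗ ℂ²) ⊗ (H_A ⊗ H_B)`. -/
def regSwap (H_A H_B : Type*)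
    [NormedAddCommGroup H_A] [InnerProductSpace ℂ H_A] [FiniteDimensional ℂ H_A]
    [NormedAddCommGroup H_B] [InnerProductSpace ℂ H_B] [FiniteDimensional ℂ H_B] :
    ((Qubit ⊗[ℂ] H_A) ⊗[ℂ] (Qubit ⊗[ℂ] H_B)) ≃ₗ[ℂ]
      ((Qubit ⊗[ℂ] Qubit) ⊗[ℂ] (H_A ⊗[ℂ] H_B)) :=
  (TensorProduct.assoc ℂ Qubit H_A (Qubit ⊗[ℂ] H_B)).trans <|
    (TensorProduct.congr (LinearEquiv.refl ℂ Qubit)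
      (((TensorProduct.assoc ℂ H_A Qubit H_B).symm.trans
        (TensorProduct.congr (TensorProduct.comm ℂ H_A Qubit) (LinearEquiv.refl ℂ H_B))).trans
          (TensorProduct.assoc ℂ Qubit H_A H_B))).trans
      (TensorProduct.assoc ℂ Qubit Qubit (H_A ⊗[ℂ] H_B)).symm

/-! ## The canonical two-qubit CHSH operator and the constants -/

/-- The canonical two-qubit CHSH operator `K = Z⊗H + Z⊗H' + X⊗H − X⊗H'`. -/
def K : (Qubit ⊗[ℂ] Qubit) →ₗ[ℂ] (Qubit ⊗[ℂ] Qubit) :=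
  TensorProduct.map pauliZ Hadamard + TensorProduct.map pauliZ HadamardPrime +
    TensorProduct.map pauliX Hadamard - TensorProduct.map pauliX HadamardPrime

/-- The constant `c = 128√2` in the anticommutator bounds. -/
def cConst : ℝ := 128 * Real.sqrt 2

/-- The error function `δ(ε) = ε + 4√(cε)`. -/
def delta (ε : ℝ) : ℝ := ε + 4 * Real.sqrt (cConst * ε)

end

open scoped TensorProduct
open Module

section LocalInner

/-- The inner product coming from `tensorInnerProductSpace`. -/
noncomputable abbrev tensorInnerLocal (E F : Type*) [NormedAddCommGroup E] [InnerProductSpace ℂ E]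
    [FiniteDimensional ℂ E] [NormedAddCommGroup F] [InnerProductSpace ℂ F]
    [FiniteDimensional ℂ F] : Inner ℂ (E ⊗[ℂ] F) :=
  (tensorInnerProductSpace E F).toInner

attribute [local instance] tensorInnerLocal

section Helpers
open TensorProduct
variable {E F : Type*} [NormedAddCommGroup E] [InnerProductSpace ℂ E] [FiniteDimensional ℂ E]
  [NormedAddCommGroup F] [InnerProductSpace ℂ F] [FiniteDimensional ℂ F]

lemma inner_tmul (a c : E) (b d : F) :
    ⟪a ⊗ₜ[ℂ] b, c ⊗ₜ[ℂ] d⟫ = ⟪a, c⟫ * ⟪b, d⟫ := by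
  have h0 : ∀ x y : E ⊗[ℂ] F, ⟪x, y⟫ = inner (𝕜 := ℂ) (tensorRepr E F x) (tensorRepr E F y) := by
    intro x y; rfl
  rw [h0]
  simp only [PiLp.inner_apply, RCLike.inner_apply]
  have hrep : ∀ (u : E) (v : F) (p : Fin (finrank ℂ E) × Fin (finrank ℂ F)),
      (tensorRepr E F (u ⊗ₜ[ℂ] v)) p
      = (stdOrthonormalBasis ℂ F).toBasis.repr v p.2 *
        (stdOrthonormalBasis ℂ E).toBasis.repr u p.1 := by
    intro u v p
    have : (tensorRepr E F (u ⊗ₜ[ℂ] v)) p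
      = (((stdOrthonormalBasis ℂ E).toBasis.tensorProduct
          (stdOrthonormalBasis ℂ F).toBasis).repr (u ⊗ₜ[ℂ] v)) (p.1, p.2) := rfl
    rw [this, Basis.tensorProduct_repr_tmul_apply, smul_eq_mul]
  simp only [hrep]
  rw [Fintype.sum_prod_type]
  have key : ∀ (u w : E) , ∑ i, (starRingEnd ℂ) ((stdOrthonormalBasis ℂ E).toBasis.repr u i) *
      (stdOrthonormalBasis ℂ E).toBasis.repr w i = ⟪u, w⟫ := by
    intro u w
    simp only [OrthonormalBasis.coe_toBasis_repr_apply, OrthonormalBasis.repr_apply_apply]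
    simp only [← inner_conj_symm u]
    simpa using (stdOrthonormalBasis ℂ E).sum_inner_mul_inner u w
  have key2 : ∀ (u w : F) , ∑ i, (starRingEnd ℂ) ((stdOrthonormalBasis ℂ F).toBasis.repr u i) *
      (stdOrthonormalBasis ℂ F).toBasis.repr w i = ⟪u, w⟫ := by
    intro u w
    simp only [OrthonormalBasis.coe_toBasis_repr_apply, OrthonormalBasis.repr_apply_apply]
    simp only [← inner_conj_symm u]
    simpa using (stdOrthonormalBasis ℂ F).sum_inner_mul_inner u w
  rw [← key a c, ← key2 b d, Finset.sum_mul_sum]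
  apply Finset.sum_congr rfl; intro i _
  apply Finset.sum_congr rfl; intro j _
  rw [map_mul]; ring

lemma inner_bridge (x y : E ⊗[ℂ] F) :
    @inner ℂ _ TensorProduct.instInner x y = ⟪x, y⟫ := by
  induction x using TensorProduct.induction_on with
  | zero => rw [TensorProduct.inner_def]; simp
  | tmul a b =>
    induction y using TensorProduct.induction_on with
    | zero => rw [TensorProduct.inner_def]; simp
    | tmul c d => rw [TensorProduct.inner_tmul, _root_.inner_tmul]
    | add y1 y2 h1 h2 =>
      rw [TensorProduct.inner_def] at h1 h2 ⊢
      simp only [map_add, inner_add_right, h1, h2]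
  | add x1 x2 h1 h2 =>
    rw [TensorProduct.inner_def] at h1 h2 ⊢
    simp only [map_add, LinearMap.add_apply, inner_add_left, h1, h2]

end Helpers

section QubitFacts
open TensorProduct

@[simp] lemma ket0_app0 : ket0 0 = 1 := rfl
@[simp] lemma ket0_app1 : ket0 1 = 0 := rfl
@[simp] lemma ket1_app0 : ket1 0 = 0 := rfl
@[simp] lemma ket1_app1 : ket1 1 = 1 := rfl

@[simp] lemma inner_ket00 : ⟪ket0, ket0⟫ = 1 := by
  simp [ket0, EuclideanSpace.inner_single_left, EuclideanSpace.single_apply]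
@[simp] lemma inner_ket11 : ⟪ket1, ket1⟫ = 1 := by
  simp [ket1, EuclideanSpace.inner_single_left, EuclideanSpace.single_apply]
@[simp] lemma inner_ket01 : ⟪ket0, ket1⟫ = 0 := by
  simp [ket0, ket1, EuclideanSpace.inner_single_left, EuclideanSpace.single_apply]
@[simp] lemma inner_ket10 : ⟪ket1, ket0⟫ = 0 := by
  simp [ket0, ket1, EuclideanSpace.inner_single_left, EuclideanSpace.single_apply]
@[simp] lemma norm_ket0 : ‖ket0‖ = 1 := by simp [ket0]
@[simp] lemma norm_ket1 : ‖ket1‖ = 1 := by simp [ket1]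

lemma ketbra_apply {H : Type*} [NormedAddCommGroup H] [InnerProductSpace ℂ H] (a b v : H) :
    ketbra a b v = ⟪b, v⟫ • a := rfl

@[simp] lemma pauliX_ket0 : pauliX ket0 = ket1 := by
  simp [pauliX, ketbra_apply, inner_ket00, inner_ket10]
@[simp] lemma pauliX_ket1 : pauliX ket1 = ket0 := by
  simp [pauliX, ketbra_apply]
@[simp] lemma pauliZ_ket0 : pauliZ ket0 = ket0 := by
  simp [pauliZ, ketbra_apply]
@[simp] lemma pauliZ_ket1 : pauliZ ket1 = -ket1 := by
  simp [pauliZ, ketbra_apply]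
@[simp] lemma proj0_ket0 : proj0 ket0 = ket0 := by simp [proj0, ketbra_apply]
@[simp] lemma proj0_ket1 : proj0 ket1 = 0 := by simp [proj0, ketbra_apply]
@[simp] lemma proj1_ket0 : proj1 ket0 = 0 := by simp [proj1, ketbra_apply]
@[simp] lemma proj1_ket1 : proj1 ket1 = ket1 := by simp [proj1, ketbra_apply]

lemma qubit_decompose (v : Qubit) : v = v 0 • ket0 + v 1 • ket1 := by
  ext i
  fin_cases i <;>
    simp [ket0, ket1, EuclideanSpace.single_apply, PiLp.add_apply, PiLp.smul_apply]

lemma qubit_ext {H : Type*} [AddCommGroup H] [Module ℂ H] {f g : Qubit →ₗ[ℂ] H}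
    (h0 : f ket0 = g ket0) (h1 : f ket1 = g ket1) : f = g := by
  apply LinearMap.ext; intro v
  rw [qubit_decompose v, map_add, map_add, map_smul, map_smul, map_smul, map_smul, h0, h1]

lemma Rot_ket0 : Rotation ket0 = (Real.sin (Real.pi/8) : ℂ) • ket1 +
    (Real.cos (Real.pi/8) : ℂ) • ket0 := by
  simp [Rotation]
lemma Rot_ket1 : Rotation ket1 = (Real.sin (Real.pi/8) : ℂ) • ket0 -
    (Real.cos (Real.pi/8) : ℂ) • ket1 := by
  simp [Rotation, smul_neg, sub_eq_add_neg]

lemma sin_sq_add_cos_sq_C :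
    (Real.sin (Real.pi/8) : ℂ) * (Real.sin (Real.pi/8) : ℂ) +
    (Real.cos (Real.pi/8) : ℂ) * (Real.cos (Real.pi/8) : ℂ) = 1 := by
  have h : Real.sin (Real.pi/8) * Real.sin (Real.pi/8) +
      Real.cos (Real.pi/8) * Real.cos (Real.pi/8) = 1 := by
    nlinarith [Real.sin_sq_add_cos_sq (Real.pi/8)]
  exact_mod_cast congrArg (Complex.ofReal) h

lemma Rot_Rot : Rotation ∘ₗ Rotation = LinearMap.id := by
  apply qubit_ext <;>
  · simp only [LinearMap.comp_apply, LinearMap.id_apply, Rot_ket0, Rot_ket1, map_add, map_sub,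
      map_smul, smul_add, smul_sub, smul_smul]
    match_scalars
    · push_cast
      linear_combination Complex.sin_sq_add_cos_sq ((Real.pi : ℂ)/8)
    · ring

end QubitFacts

section QubitFacts2
open TensorProduct

lemma sqrt2_mul_self : Real.sqrt 2 * Real.sqrt 2 = 2 := Real.mul_self_sqrt (by norm_num)
lemma sqrt2_ne : (Real.sqrt 2 : ℂ) ≠ 0 := by
  simp only [ne_eq, Complex.ofReal_eq_zero]
  positivity

lemma trig1 : Real.sqrt 2 * Real.sin (Real.pi/8) =
    Real.cos (Real.pi/8) - Real.sin (Real.pi/8) := by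
  have h := Real.sin_sub (Real.pi/4) (Real.pi/8)
  rw [show Real.pi/4 - Real.pi/8 = Real.pi/8 by ring] at h
  rw [Real.sin_pi_div_four, Real.cos_pi_div_four] at h
  linear_combination Real.sqrt 2 * h + ((Real.cos (Real.pi/8) - Real.sin (Real.pi/8))/2) * sqrt2_mul_self

lemma trig2 : Real.sqrt 2 * Real.cos (Real.pi/8) =
    Real.sin (Real.pi/8) + Real.cos (Real.pi/8) := by
  have h := Real.cos_sub (Real.pi/4) (Real.pi/8)
  rw [show Real.pi/4 - Real.pi/8 = Real.pi/8 by ring] at h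
  rw [Real.sin_pi_div_four, Real.cos_pi_div_four] at h
  linear_combination Real.sqrt 2 * h + ((Real.cos (Real.pi/8) + Real.sin (Real.pi/8))/2) * sqrt2_mul_self

lemma trig1C : (Real.sqrt 2 : ℂ) * Complex.sin ((Real.pi : ℂ)/8) =
    Complex.cos ((Real.pi : ℂ)/8) - Complex.sin ((Real.pi : ℂ)/8) := by
  have h := congrArg Complex.ofReal trig1
  push_cast at h
  exact h

lemma trig2C : (Real.sqrt 2 : ℂ) * Complex.cos ((Real.pi : ℂ)/8) =
    Complex.sin ((Real.pi : ℂ)/8) + Complex.cos ((Real.pi : ℂ)/8) := by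
  have h := congrArg Complex.ofReal trig2
  push_cast at h
  exact h

@[simp] lemma Had_ket0 : Hadamard ket0 = ((Real.sqrt 2 : ℂ))⁻¹ • (ket0 + ket1) := by
  simp [Hadamard]
@[simp] lemma Had_ket1 : Hadamard ket1 = ((Real.sqrt 2 : ℂ))⁻¹ • (ket0 - ket1) := by
  simp [Hadamard, sub_eq_add_neg]
  module

lemma HpR_RX : HadamardPrime ∘ₗ Rotation = Rotation ∘ₗ pauliX := by
  apply qubit_ext <;>
  · simp only [LinearMap.comp_apply, Rot_ket0, Rot_ket1, pauliX_ket0, pauliX_ket1,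
      HadamardPrime, LinearMap.smul_apply, LinearMap.sub_apply, map_add, map_sub, map_smul,
      pauliZ_ket0, pauliZ_ket1, pauliX_ket0, pauliX_ket1, smul_add, smul_sub, smul_smul]
    match_scalars <;> push_cast <;> field_simp <;>
      first
      | linear_combination trig2C
      | linear_combination trig1C
      | linear_combination (Real.sqrt 2 : ℂ) * trig1C
      | linear_combination (Real.sqrt 2 : ℂ) * trig2C
      | linear_combination (-(Real.sqrt 2 : ℂ)) * trig1C
      | linear_combination (-(Real.sqrt 2 : ℂ)) * trig2C
      | linear_combination -trig1C
      | linear_combination -trig2C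
      | ring

lemma ketbra_inner_left {H : Type*} [NormedAddCommGroup H] [InnerProductSpace ℂ H]
    (a b x y : H) : ⟪ketbra a b x, y⟫ = ⟪x, b⟫ * ⟪a, y⟫ := by
  rw [ketbra_apply, inner_smul_left, ← inner_conj_symm b x]
  simp

lemma ketbra_inner_right {H : Type*} [NormedAddCommGroup H] [InnerProductSpace ℂ H]
    (a b x y : H) : ⟪x, ketbra a b y⟫ = ⟪b, y⟫ * ⟪x, a⟫ := by
  rw [ketbra_apply, inner_smul_right]

lemma pauliZ_symm (x y : Qubit) : ⟪pauliZ x, y⟫ = ⟪x, pauliZ y⟫ := by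
  simp only [pauliZ, LinearMap.sub_apply, inner_sub_left, inner_sub_right,
    ketbra_inner_left, ketbra_inner_right]
  ring

lemma pauliX_symm (x y : Qubit) : ⟪pauliX x, y⟫ = ⟪x, pauliX y⟫ := by
  simp only [pauliX, LinearMap.add_apply, inner_add_left, inner_add_right,
    ketbra_inner_left, ketbra_inner_right]
  ring

lemma Rotation_symm (x y : Qubit) : ⟪Rotation x, y⟫ = ⟪x, Rotation y⟫ := by
  simp only [Rotation, LinearMap.add_apply, LinearMap.smul_apply, inner_smul_left,
    inner_smul_right, inner_add_left, inner_add_right, Complex.conj_ofReal,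
    pauliX_symm, pauliZ_symm]

lemma adjoint_Rotation : LinearMap.adjoint Rotation = Rotation :=
  ((LinearMap.eq_adjoint_iff Rotation Rotation).mpr Rotation_symm).symm

end QubitFacts2

section TensorHelpers
open TensorProduct
variable {E F E₂ F₂ : Type*}
  [NormedAddCommGroup E] [InnerProductSpace ℂ E] [FiniteDimensional ℂ E]
  [NormedAddCommGroup F] [InnerProductSpace ℂ F] [FiniteDimensional ℂ F]
  [NormedAddCommGroup E₂] [InnerProductSpace ℂ E₂] [FiniteDimensional ℂ E₂]
  [NormedAddCommGroup F₂] [InnerProductSpace ℂ F₂] [FiniteDimensional ℂ F₂]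

lemma inner_map_map (S : E →ₗ[ℂ] E₂) (T : F →ₗ[ℂ] F₂)
    (hS : ∀ a c, ⟪S a, S c⟫ = ⟪a, c⟫) (hT : ∀ b d, ⟪T b, T d⟫ = ⟪b, d⟫)
    (x y : E ⊗[ℂ] F) : ⟪TensorProduct.map S T x, TensorProduct.map S T y⟫ = ⟪x, y⟫ := by
  induction x using TensorProduct.induction_on with
  | zero => simp
  | tmul a b =>
    induction y using TensorProduct.induction_on with
    | zero => simp
    | tmul c d => simp only [TensorProduct.map_tmul, _root_.inner_tmul, hS, hT]
    | add y1 y2 h1 h2 => simp only [map_add, inner_add_right, h1, h2]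
  | add x1 x2 h1 h2 => simp only [map_add, inner_add_left, h1, h2]

lemma norm_map_map (S : E →ₗ[ℂ] E₂) (T : F →ₗ[ℂ] F₂)
    (hS : ∀ a c, ⟪S a, S c⟫ = ⟪a, c⟫) (hT : ∀ b d, ⟪T b, T d⟫ = ⟪b, d⟫)
    (x : E ⊗[ℂ] F) : ‖TensorProduct.map S T x‖ = ‖x‖ := by
  rw [@norm_eq_sqrt_re_inner ℂ, @norm_eq_sqrt_re_inner ℂ, inner_map_map S T hS hT]

lemma inner_map_adjoint (S' S : E →ₗ[ℂ] E) (T' T : F →ₗ[ℂ] F)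
    (hS : ∀ a c, ⟪S' a, c⟫ = ⟪a, S c⟫) (hT : ∀ b d, ⟪T' b, d⟫ = ⟪b, T d⟫)
    (x y : E ⊗[ℂ] F) : ⟪TensorProduct.map S' T' x, y⟫ = ⟪x, TensorProduct.map S T y⟫ := by
  induction x using TensorProduct.induction_on with
  | zero => simp
  | tmul a b =>
    induction y using TensorProduct.induction_on with
    | zero => simp
    | tmul c d => simp only [TensorProduct.map_tmul, _root_.inner_tmul, hS, hT]
    | add y1 y2 h1 h2 => simp only [map_add, inner_add_right, h1, h2]
  | add x1 x2 h1 h2 => simp only [map_add, inner_add_left, h1, h2]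

lemma map_id_comp (f : F →ₗ[ℂ] F₂) (g : F₂ →ₗ[ℂ] E₂) :
    TensorProduct.map (LinearMap.id : E →ₗ[ℂ] E) (g ∘ₗ f)
      = TensorProduct.map LinearMap.id g ∘ₗ TensorProduct.map LinearMap.id f := by
  rw [← TensorProduct.map_comp, LinearMap.id_comp]

lemma map_id_sub (f g : F →ₗ[ℂ] F₂) :
    TensorProduct.map (LinearMap.id : E →ₗ[ℂ] E) (f - g)
      = TensorProduct.map LinearMap.id f - TensorProduct.map LinearMap.id g := by
  apply TensorProduct.ext'
  intro a b
  simp [TensorProduct.map_tmul, TensorProduct.tmul_sub]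

lemma map_id_smul (c : ℂ) (f : F →ₗ[ℂ] F₂) :
    TensorProduct.map (LinearMap.id : E →ₗ[ℂ] E) (c • f)
      = c • TensorProduct.map LinearMap.id f := by
  apply TensorProduct.ext'
  intro a b
  simp [TensorProduct.map_tmul, TensorProduct.tmul_smul]

lemma map_id_add (f g : F →ₗ[ℂ] F₂) :
    TensorProduct.map (LinearMap.id : E →ₗ[ℂ] E) (f + g)
      = TensorProduct.map LinearMap.id f + TensorProduct.map LinearMap.id g :=
  TensorProduct.map_add_right _ _ _

end TensorHelpers

section TensorSmul
open TensorProduct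
variable {E F : Type*}
  [NormedAddCommGroup E] [InnerProductSpace ℂ E] [FiniteDimensional ℂ E]
  [NormedAddCommGroup F] [InnerProductSpace ℂ F] [FiniteDimensional ℂ F]

lemma tensor_inner_smul_left (c : ℂ) (x y : E ⊗[ℂ] F) :
    ⟪c • x, y⟫ = (starRingEnd ℂ) c * ⟪x, y⟫ := by
  have h0 : ∀ u v : E ⊗[ℂ] F,
      ⟪u, v⟫ = inner (𝕜 := ℂ) (tensorRepr E F u) (tensorRepr E F v) := fun _ _ => rfl
  rw [h0, h0, map_smul, inner_smul_left]

lemma tensor_inner_smul_right (c : ℂ) (x y : E ⊗[ℂ] F) :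
    ⟪x, c • y⟫ = c * ⟪x, y⟫ := by
  have h0 : ∀ u v : E ⊗[ℂ] F,
      ⟪u, v⟫ = inner (𝕜 := ℂ) (tensorRepr E F u) (tensorRepr E F v) := fun _ _ => rfl
  rw [h0, h0, map_smul, inner_smul_right]

lemma tensor_inner_neg_left (x y : E ⊗[ℂ] F) : ⟪-x, y⟫ = -⟪x, y⟫ := by
  have h0 : ∀ u v : E ⊗[ℂ] F,
      ⟪u, v⟫ = inner (𝕜 := ℂ) (tensorRepr E F u) (tensorRepr E F v) := fun _ _ => rfl
  rw [h0, h0, map_neg, inner_neg_left]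

lemma tensor_norm_smul (c : ℂ) (x : E ⊗[ℂ] F) : ‖c • x‖ = ‖c‖ * ‖x‖ := by
  rw [@norm_eq_sqrt_re_inner ℂ, @norm_eq_sqrt_re_inner ℂ _ _ _ _ x, tensor_inner_smul_left,
    tensor_inner_smul_right, ← mul_assoc, ← Complex.normSq_eq_conj_mul_self]
  have hre : RCLike.re ((Complex.normSq c : ℂ) * ⟪x, x⟫)
      = Complex.normSq c * RCLike.re ⟪x, x⟫ := by
    simp [Complex.mul_re]
  rw [hre, Real.sqrt_mul (Complex.normSq_nonneg c), Complex.normSq_eq_norm_sq,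
    Real.sqrt_sq (norm_nonneg c)]

end TensorSmul

section Extractor
open TensorProduct
variable {H : Type*} [NormedAddCommGroup H] [InnerProductSpace ℂ H] [FiniteDimensional ℂ H]

lemma inv_sqrt2_mul : ((Real.sqrt 2 : ℂ))⁻¹ * ((Real.sqrt 2 : ℂ))⁻¹ = (2:ℂ)⁻¹ := by
  have h : ((Real.sqrt 2 : ℂ)) * ((Real.sqrt 2 : ℂ)) = 2 := by
    exact_mod_cast congrArg Complex.ofReal sqrt2_mul_self
  rw [← mul_inv, h]

lemma map_comp_left {E F E₂ E₃ : Type*} [AddCommGroup E] [Module ℂ E] [AddCommGroup F]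
    [Module ℂ F] [AddCommGroup E₂] [Module ℂ E₂] [AddCommGroup E₃] [Module ℂ E₃]
    (f : E →ₗ[ℂ] E₂) (g : E₂ →ₗ[ℂ] E₃) :
    TensorProduct.map (g ∘ₗ f) (LinearMap.id : F →ₗ[ℂ] F)
      = TensorProduct.map g LinearMap.id ∘ₗ TensorProduct.map f LinearMap.id := by
  apply TensorProduct.ext'
  intro a b
  simp [TensorProduct.map_tmul]

lemma controlGate_tmul0 (A : H →ₗ[ℂ] H) (w : H) :
    controlGate A (ket0 ⊗ₜ[ℂ] w) = ket0 ⊗ₜ[ℂ] w := by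
  simp [controlGate, TensorProduct.map_tmul]

lemma controlGate_tmul1 (A : H →ₗ[ℂ] H) (w : H) :
    controlGate A (ket1 ⊗ₜ[ℂ] w) = ket1 ⊗ₜ[ℂ] A w := by
  simp [controlGate, TensorProduct.map_tmul]

lemma VA_apply (A0 A1 : H →ₗ[ℂ] H) (v : H) :
    VA A0 A1 v = (2:ℂ)⁻¹ • (ket0 ⊗ₜ[ℂ] (v + A0 v) + ket1 ⊗ₜ[ℂ] (A1 v - A1 (A0 v))) := by
  have h : VA A0 A1 v = (controlGate A1) ((TensorProduct.map Hadamard LinearMap.id)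
      ((controlGate A0) ((TensorProduct.map Hadamard LinearMap.id) (ket0 ⊗ₜ[ℂ] v)))) := rfl
  rw [h]
  simp only [TensorProduct.map_tmul, LinearMap.id_apply, Had_ket0, Had_ket1,
    ← TensorProduct.smul_tmul', map_smul, TensorProduct.add_tmul, TensorProduct.sub_tmul,
    map_add, map_sub, controlGate_tmul0, controlGate_tmul1, smul_smul, inv_sqrt2_mul,
    TensorProduct.tmul_add, TensorProduct.tmul_sub]
  match_scalars <;> (try simp only [inv_sqrt2_mul, pow_two]) <;> norm_num [inv_sqrt2_mul]

set_option maxRecDepth 10000 in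
lemma VB_eq (B0 B1 : H →ₗ[ℂ] H) :
    VB B0 B1 = (TensorProduct.map Rotation LinearMap.id) ∘ₗ VA B0 B1 := by
  have h2 : (LinearMap.adjoint Rotation) auxState = ket0 := by
    rw [adjoint_Rotation]
    have := LinearMap.ext_iff.mp Rot_Rot ket0
    simpa [LinearMap.comp_apply, auxState] using this
  apply LinearMap.ext; intro v
  simp only [VB, unitaryUB, VA, embed, LinearMap.comp_apply, TensorProduct.mk_apply,
    TensorProduct.map_tmul, LinearMap.id_apply, h2]

lemma intertwine_B1 (B0 B1 : H →ₗ[ℂ] H) (h1 : IsBinaryObservable B1) :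
    TensorProduct.map HadamardPrime LinearMap.id ∘ₗ VB B0 B1 - VB B0 B1 ∘ₗ B1
    = TensorProduct.map Rotation LinearMap.id ∘ₗ
      ((2:ℂ)⁻¹ • ((TensorProduct.mk ℂ Qubit H ket1) ∘ₗ (B1 ∘ₗ (B0 ∘ₗ B1 + B1 ∘ₗ B0))
         - (TensorProduct.mk ℂ Qubit H ket0) ∘ₗ (B0 ∘ₗ B1 + B1 ∘ₗ B0))) := by
  have e1 : ∀ w, B1 (B1 w) = w := by
    intro w
    have := LinearMap.ext_iff.mp h1.sq_one w
    simpa [LinearMap.comp_apply] using this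
  apply LinearMap.ext; intro v
  rw [VB_eq]
  simp only [LinearMap.sub_apply, LinearMap.comp_apply]
  rw [show (TensorProduct.map HadamardPrime LinearMap.id)
        ((TensorProduct.map Rotation LinearMap.id) (VA B0 B1 v))
      = (TensorProduct.map (HadamardPrime ∘ₗ Rotation) (LinearMap.id : H →ₗ[ℂ] H))
          (VA B0 B1 v) by rw [map_comp_left]; rfl]
  rw [HpR_RX, map_comp_left]
  simp only [LinearMap.comp_apply]
  rw [← map_sub]
  congr 1
  rw [VA_apply, VA_apply]
  simp only [map_smul, map_add, map_sub, TensorProduct.map_tmul, LinearMap.id_apply,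
    pauliX_ket0, pauliX_ket1, LinearMap.smul_apply, LinearMap.sub_apply, LinearMap.comp_apply,
    TensorProduct.mk_apply, LinearMap.add_apply, map_add, e1]
  simp only [TensorProduct.tmul_add, TensorProduct.tmul_sub]
  module

end Extractor

section Analytic
open TensorProduct
variable {H : Type*} [NormedAddCommGroup H] [InnerProductSpace ℂ H] [FiniteDimensional ℂ H]

lemma binObs_e {A : H →ₗ[ℂ] H} (h : IsBinaryObservable A) : ∀ w, A (A w) = w := by
  intro w
  have := LinearMap.ext_iff.mp h.sq_one w
  simpa [LinearMap.comp_apply] using this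

lemma binObs_ip {A : H →ₗ[ℂ] H} (h : IsBinaryObservable A) (a c : H) :
    ⟪A a, A c⟫ = ⟪a, c⟫ := by
  rw [h.symm a (A c), binObs_e h]

lemma id_ip (a c : H) : ⟪(LinearMap.id : H →ₗ[ℂ] H) a, (LinearMap.id : H →ₗ[ℂ] H) c⟫ = ⟪a, c⟫ := rfl

lemma anticomm_symm {B0 B1 : H →ₗ[ℂ] H} (h0 : IsBinaryObservable B0)
    (h1 : IsBinaryObservable B1) (b d : H) :
    ⟪(B0 ∘ₗ B1 + B1 ∘ₗ B0) b, d⟫ = ⟪b, (B0 ∘ₗ B1 + B1 ∘ₗ B0) d⟫ := by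
  simp only [LinearMap.add_apply, LinearMap.comp_apply, inner_add_left, inner_add_right]
  rw [h0.symm (B1 b) d, h1.symm b (B0 d), h1.symm (B0 b) d, h0.symm b (B1 d)]
  ring

lemma comm_antisymm {B0 B1 : H →ₗ[ℂ] H} (h0 : IsBinaryObservable B0)
    (h1 : IsBinaryObservable B1) (b d : H) :
    ⟪(-(B0 ∘ₗ B1 - B1 ∘ₗ B0)) b, d⟫ = ⟪b, (B0 ∘ₗ B1 - B1 ∘ₗ B0) d⟫ := by
  simp only [LinearMap.neg_apply, LinearMap.sub_apply, LinearMap.comp_apply, inner_neg_left,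
    inner_sub_left, inner_sub_right]
  rw [h0.symm (B1 b) d, h1.symm b (B0 d), h1.symm (B0 b) d, h0.symm b (B1 d)]
  ring

lemma anticomm_sq {B0 B1 : H →ₗ[ℂ] H} (h0 : IsBinaryObservable B0)
    (h1 : IsBinaryObservable B1) :
    (B0 ∘ₗ B1 + B1 ∘ₗ B0) ∘ₗ (B0 ∘ₗ B1 + B1 ∘ₗ B0)
      = (4:ℂ) • LinearMap.id + (B0 ∘ₗ B1 - B1 ∘ₗ B0) ∘ₗ (B0 ∘ₗ B1 - B1 ∘ₗ B0) := by
  apply LinearMap.ext; intro w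
  simp only [LinearMap.add_apply, LinearMap.sub_apply, LinearMap.comp_apply,
    LinearMap.smul_apply, LinearMap.id_apply, map_add, map_sub, binObs_e h0, binObs_e h1]
  module

end Analytic

section Main
open TensorProduct
variable {H_A H_B : Type*}
  [NormedAddCommGroup H_A] [InnerProductSpace ℂ H_A] [FiniteDimensional ℂ H_A]
  [NormedAddCommGroup H_B] [InnerProductSpace ℂ H_B] [FiniteDimensional ℂ H_B]

lemma map_split (f : H_A →ₗ[ℂ] H_A) (g : H_B →ₗ[ℂ] H_B) :
    TensorProduct.map f g = TensorProduct.map f LinearMap.id ∘ₗ TensorProduct.map LinearMap.id g := by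
  rw [← TensorProduct.map_comp, LinearMap.comp_id, LinearMap.id_comp]

lemma map_sub_id (f g : H_A →ₗ[ℂ] H_A) :
    TensorProduct.map (f - g) (LinearMap.id : H_B →ₗ[ℂ] H_B)
      = TensorProduct.map f LinearMap.id - TensorProduct.map g LinearMap.id := by
  apply TensorProduct.ext'; intro a b
  simp [TensorProduct.map_tmul, TensorProduct.sub_tmul]

lemma map_neg_id (f : H_A →ₗ[ℂ] H_A) :
    TensorProduct.map (-f) (LinearMap.id : H_B →ₗ[ℂ] H_B)
      = - TensorProduct.map f (LinearMap.id : H_B →ₗ[ℂ] H_B) := by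
  apply TensorProduct.ext'; intro a b
  simp [TensorProduct.map_tmul, TensorProduct.neg_tmul]

lemma map_id_neg (f : H_B →ₗ[ℂ] H_B) :
    TensorProduct.map (LinearMap.id : H_A →ₗ[ℂ] H_A) (-f)
      = - TensorProduct.map (LinearMap.id : H_A →ₗ[ℂ] H_A) f := by
  apply TensorProduct.ext'; intro a b
  simp [TensorProduct.map_tmul, TensorProduct.tmul_neg]

lemma CHSH_op_sq (S : CHSHStrategy H_A H_B) :
    CHSH_op S.A0 S.A1 S.B0 S.B1 ∘ₗ CHSH_op S.A0 S.A1 S.B0 S.B1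
      = (4:ℂ) • LinearMap.id + TensorProduct.map (S.A1 ∘ₗ S.A0 - S.A0 ∘ₗ S.A1)
          (S.B0 ∘ₗ S.B1 - S.B1 ∘ₗ S.B0) := by
  apply TensorProduct.ext'; intro a b
  simp only [CHSH_op, LinearMap.comp_apply, LinearMap.add_apply, LinearMap.sub_apply,
    TensorProduct.map_tmul, map_add, map_sub, LinearMap.smul_apply, LinearMap.id_apply,
    binObs_e S.A0_bin, binObs_e S.A1_bin, binObs_e S.B0_bin, binObs_e S.B1_bin,
    TensorProduct.tmul_sub, TensorProduct.sub_tmul, TensorProduct.tmul_add,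
    TensorProduct.add_tmul]
  module

lemma CHSH_symm (S : CHSHStrategy H_A H_B) (x y : H_A ⊗[ℂ] H_B) :
    ⟪CHSH_op S.A0 S.A1 S.B0 S.B1 x, y⟫ = ⟪x, CHSH_op S.A0 S.A1 S.B0 S.B1 y⟫ := by
  simp only [CHSH_op, LinearMap.add_apply, LinearMap.sub_apply, inner_add_left,
    inner_sub_left, inner_add_right, inner_sub_right]
  rw [inner_map_adjoint S.A0 S.A0 S.B0 S.B0 S.A0_bin.symm S.B0_bin.symm,
    inner_map_adjoint S.A0 S.A0 S.B1 S.B1 S.A0_bin.symm S.B1_bin.symm,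
    inner_map_adjoint S.A1 S.A1 S.B0 S.B0 S.A1_bin.symm S.B0_bin.symm,
    inner_map_adjoint S.A1 S.A1 S.B1 S.B1 S.A1_bin.symm S.B1_bin.symm]

end Main

section Final
open TensorProduct

lemma re_inner_self {G : Type*} [NormedAddCommGroup G] [InnerProductSpace ℂ G] (x : G) :
    (⟪x, x⟫).re = ‖x‖^2 := by
  simpa using inner_self_eq_norm_sq (𝕜 := ℂ) x

lemma one_le_sqrt2 : 1 ≤ Real.sqrt 2 := by
  rw [show (1:ℝ) = Real.sqrt 1 by simp]
  exact Real.sqrt_le_sqrt (by norm_num)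

end Final

open scoped TensorProduct
open Module

theorem B1_approx_intertwine_aux
    {H_A H_B : Type*}
    [NormedAddCommGroup H_A] [InnerProductSpace ℂ H_A] [FiniteDimensional ℂ H_A]
    [NormedAddCommGroup H_B] [InnerProductSpace ℂ H_B] [FiniteDimensional ℂ H_B]
    (S : CHSHStrategy H_A H_B) (ε : ℝ) (hε : 0 ≤ ε)
    (hBias : chshBias S ≥ 2 * Real.sqrt 2 - ε) :
    ‖(TensorProduct.map (LinearMap.id : H_A →ₗ[ℂ] H_A)
        ((TensorProduct.map HadamardPrime (LinearMap.id : H_B →ₗ[ℂ] H_B)) ∘ₗ VB S.B0 S.B1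
          - VB S.B0 S.B1 ∘ₗ S.B1)) S.psi‖ ≤ Real.sqrt (cConst * ε) := by
  have hψ : ‖S.psi‖ = 1 := S.psi_norm
  have ipidA : ∀ a c : H_A,
      ⟪(LinearMap.id : H_A →ₗ[ℂ] H_A) a, (LinearMap.id : H_A →ₗ[ℂ] H_A) c⟫ = ⟪a, c⟫ :=
    fun a c => rfl
  have ipidB : ∀ a c : H_B,
      ⟪(LinearMap.id : H_B →ₗ[ℂ] H_B) a, (LinearMap.id : H_B →ₗ[ℂ] H_B) c⟫ = ⟪a, c⟫ :=
    fun a c => rfl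
  have ipR : ∀ a c : Qubit, ⟪Rotation a, Rotation c⟫ = ⟪a, c⟫ := by
    intro a c
    rw [Rotation_symm, ← LinearMap.comp_apply, Rot_Rot, LinearMap.id_apply]
  have ipB1 : ∀ b d : H_B, ⟪S.B1 b, S.B1 d⟫ = ⟪b, d⟫ := binObs_ip S.B1_bin
  -- the anticommutator and commutators
  set Cop : H_B →ₗ[ℂ] H_B := S.B0 ∘ₗ S.B1 + S.B1 ∘ₗ S.B0 with hCopdef
  set Cb : H_B →ₗ[ℂ] H_B := S.B0 ∘ₗ S.B1 - S.B1 ∘ₗ S.B0 with hCbdef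
  set Ca : H_A →ₗ[ℂ] H_A := S.A1 ∘ₗ S.A0 - S.A0 ∘ₗ S.A1 with hCadef
  set t : ℝ := ‖TensorProduct.map (LinearMap.id : H_A →ₗ[ℂ] H_A) Cop S.psi‖ with htdef
  set vn : ℝ := ‖TensorProduct.map (LinearMap.id : H_A →ₗ[ℂ] H_A) Cb S.psi‖ with hvndef
  have tnn : 0 ≤ t := norm_nonneg _
  have vnn : 0 ≤ vn := norm_nonneg _
  -- Step 1 : the quantity is at most t
  have step1 : ‖(TensorProduct.map (LinearMap.id : H_A →ₗ[ℂ] H_A)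
        ((TensorProduct.map HadamardPrime (LinearMap.id : H_B →ₗ[ℂ] H_B)) ∘ₗ VB S.B0 S.B1
          - VB S.B0 S.B1 ∘ₗ S.B1)) S.psi‖ ≤ t := by
    rw [intertwine_B1 S.B0 S.B1 S.B1_bin, map_id_comp, LinearMap.comp_apply]
    have hnorm : ∀ x : H_A ⊗[ℂ] (Qubit ⊗[ℂ] H_B),
        ‖TensorProduct.map (LinearMap.id : H_A →ₗ[ℂ] H_A)
          (TensorProduct.map Rotation (LinearMap.id : H_B →ₗ[ℂ] H_B)) x‖ = ‖x‖ :=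
      fun x => norm_map_map _ _ ipidA (inner_map_map Rotation LinearMap.id ipR ipidB) x
    rw [hnorm]
    rw [map_id_smul, LinearMap.smul_apply, tensor_norm_smul]
    have hn2 : ‖(2:ℂ)⁻¹‖ = 2⁻¹ := by norm_num
    rw [hn2, map_id_sub, LinearMap.sub_apply]
    have hb1 : ‖(TensorProduct.map (LinearMap.id : H_A →ₗ[ℂ] H_A)
        (TensorProduct.mk ℂ Qubit H_B ket1 ∘ₗ (S.B1 ∘ₗ Cop))) S.psi‖ = t := by
      rw [show TensorProduct.mk ℂ Qubit H_B ket1 ∘ₗ (S.B1 ∘ₗ Cop)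
          = (TensorProduct.mk ℂ Qubit H_B ket1 ∘ₗ S.B1) ∘ₗ Cop from rfl]
      rw [map_id_comp, LinearMap.comp_apply]
      have hip : ∀ b d : H_B, ⟪(TensorProduct.mk ℂ Qubit H_B ket1 ∘ₗ S.B1) b,
          (TensorProduct.mk ℂ Qubit H_B ket1 ∘ₗ S.B1) d⟫ = ⟪b, d⟫ := by
        intro b d
        rw [LinearMap.comp_apply, LinearMap.comp_apply, TensorProduct.mk_apply,
          TensorProduct.mk_apply, _root_.inner_tmul, ipB1, inner_ket11, one_mul]
      have hnorm : ∀ x : H_A ⊗[ℂ] H_B,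
          ‖TensorProduct.map (LinearMap.id : H_A →ₗ[ℂ] H_A)
            (TensorProduct.mk ℂ Qubit H_B ket1 ∘ₗ S.B1) x‖ = ‖x‖ :=
        fun x => norm_map_map _ _ ipidA hip x
      rw [hnorm]
    have hb0 : ‖(TensorProduct.map (LinearMap.id : H_A →ₗ[ℂ] H_A)
        (TensorProduct.mk ℂ Qubit H_B ket0 ∘ₗ Cop)) S.psi‖ = t := by
      rw [map_id_comp, LinearMap.comp_apply]
      have hip : ∀ b d : H_B, ⟪(TensorProduct.mk ℂ Qubit H_B ket0) b,
          (TensorProduct.mk ℂ Qubit H_B ket0) d⟫ = ⟪b, d⟫ := by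
        intro b d
        rw [TensorProduct.mk_apply, TensorProduct.mk_apply, _root_.inner_tmul, inner_ket00, one_mul]
      have hnorm : ∀ x : H_A ⊗[ℂ] H_B,
          ‖TensorProduct.map (LinearMap.id : H_A →ₗ[ℂ] H_A)
            (TensorProduct.mk ℂ Qubit H_B ket0) x‖ = ‖x‖ :=
        fun x => norm_map_map _ _ ipidA hip x
      rw [hnorm]
    calc 2⁻¹ * ‖(TensorProduct.map (LinearMap.id : H_A →ₗ[ℂ] H_A)
            (TensorProduct.mk ℂ Qubit H_B ket1 ∘ₗ (S.B1 ∘ₗ Cop))) S.psi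
          - (TensorProduct.map (LinearMap.id : H_A →ₗ[ℂ] H_A)
            (TensorProduct.mk ℂ Qubit H_B ket0 ∘ₗ Cop)) S.psi‖
        ≤ 2⁻¹ * (t + t) := by
          apply mul_le_mul_of_nonneg_left _ (by norm_num)
          refine (norm_sub_le (E := H_A ⊗[ℂ] (Qubit ⊗[ℂ] H_B)) _ _).trans (le_of_eq ?_)
          rw [hb1, hb0]
      _ = t := by ring
  -- Step 2 : t² = 4 - vn²
  have step2 : t^2 = 4 - vn^2 := by
    have h1 : (⟪TensorProduct.map (LinearMap.id : H_A →ₗ[ℂ] H_A) Cop S.psi,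
        TensorProduct.map (LinearMap.id : H_A →ₗ[ℂ] H_A) Cop S.psi⟫).re = t^2 :=
      re_inner_self _
    have h2 : ⟪TensorProduct.map (LinearMap.id : H_A →ₗ[ℂ] H_A) Cop S.psi,
        TensorProduct.map (LinearMap.id : H_A →ₗ[ℂ] H_A) Cop S.psi⟫
        = ⟪S.psi, TensorProduct.map (LinearMap.id : H_A →ₗ[ℂ] H_A) Cop
            (TensorProduct.map (LinearMap.id : H_A →ₗ[ℂ] H_A) Cop S.psi)⟫ :=
      inner_map_adjoint LinearMap.id LinearMap.id Cop Cop ipidA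
        (anticomm_symm S.B0_bin S.B1_bin) _ _
    have h3 : TensorProduct.map (LinearMap.id : H_A →ₗ[ℂ] H_A) Cop
        (TensorProduct.map (LinearMap.id : H_A →ₗ[ℂ] H_A) Cop S.psi)
        = (4:ℂ) • S.psi + TensorProduct.map (LinearMap.id : H_A →ₗ[ℂ] H_A) Cb
            (TensorProduct.map (LinearMap.id : H_A →ₗ[ℂ] H_A) Cb S.psi) := by
      rw [← LinearMap.comp_apply, ← map_id_comp, hCopdef, anticomm_sq S.B0_bin S.B1_bin,
        map_id_add, map_id_smul, TensorProduct.map_id, ← hCbdef, map_id_comp]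
      simp only [LinearMap.add_apply, LinearMap.smul_apply, LinearMap.id_apply,
        LinearMap.comp_apply]
    have h4 : ⟪S.psi, TensorProduct.map (LinearMap.id : H_A →ₗ[ℂ] H_A) Cb
          (TensorProduct.map (LinearMap.id : H_A →ₗ[ℂ] H_A) Cb S.psi)⟫
        = -⟪TensorProduct.map (LinearMap.id : H_A →ₗ[ℂ] H_A) Cb S.psi,
            TensorProduct.map (LinearMap.id : H_A →ₗ[ℂ] H_A) Cb S.psi⟫ := by
      have := inner_map_adjoint (LinearMap.id : H_A →ₗ[ℂ] H_A) LinearMap.id (-Cb) Cb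
        ipidA (comm_antisymm S.B0_bin S.B1_bin) S.psi
        (TensorProduct.map (LinearMap.id : H_A →ₗ[ℂ] H_A) Cb S.psi)
      rw [← this, map_id_neg, LinearMap.neg_apply, tensor_inner_neg_left]
    have hψ2 : ⟪S.psi, S.psi⟫ = 1 := by
      rw [inner_self_eq_norm_sq_to_K, hψ]
      norm_num
    rw [← h1, h2, h3, inner_add_right, tensor_inner_smul_right, h4, hψ2]
    have : (⟪TensorProduct.map (LinearMap.id : H_A →ₗ[ℂ] H_A) Cb S.psi,
        TensorProduct.map (LinearMap.id : H_A →ₗ[ℂ] H_A) Cb S.psi⟫).re = vn^2 :=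
      re_inner_self _
    simp only [Complex.add_re, Complex.neg_re, this, Complex.one_re, Complex.re_ofNat,
      mul_one]
    ring
  -- Step 3 : t² ≤ cConst * ε
  have step3 : t^2 ≤ cConst * ε := by
    have hcc : cConst = 128 * Real.sqrt 2 := rfl
    by_cases hcase : Real.sqrt 2 * ε ≤ 1
    · -- main case
      have hnn : (0:ℝ) ≤ 2 * Real.sqrt 2 - ε := by
        nlinarith [one_le_sqrt2, hε, hcase]
      have hbias1 : 2 * Real.sqrt 2 - ε
          ≤ ‖CHSH_op S.A0 S.A1 S.B0 S.B1 S.psi‖ := by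
        calc 2 * Real.sqrt 2 - ε ≤ chshBias S := hBias
          _ = (⟪S.psi, CHSH_op S.A0 S.A1 S.B0 S.B1 S.psi⟫).re := by rw [← inner_bridge]; rfl
          _ ≤ ‖⟪S.psi, CHSH_op S.A0 S.A1 S.B0 S.B1 S.psi⟫‖ := Complex.re_le_norm _
          _ = ‖⟪S.psi, CHSH_op S.A0 S.A1 S.B0 S.B1 S.psi⟫‖ := rfl
          _ ≤ ‖S.psi‖ * ‖CHSH_op S.A0 S.A1 S.B0 S.B1 S.psi‖ := norm_inner_le_norm _ _
          _ = ‖CHSH_op S.A0 S.A1 S.B0 S.B1 S.psi‖ := by rw [hψ, one_mul]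
      have hWsq : (2 * Real.sqrt 2 - ε)^2 ≤ ‖CHSH_op S.A0 S.A1 S.B0 S.B1 S.psi‖^2 :=
        pow_le_pow_left₀ hnn hbias1 2
      -- compute ‖Wψ‖²
      have hW2 : ‖CHSH_op S.A0 S.A1 S.B0 S.B1 S.psi‖^2
          = 4 - (⟪TensorProduct.map Ca (LinearMap.id : H_B →ₗ[ℂ] H_B) S.psi,
              TensorProduct.map (LinearMap.id : H_A →ₗ[ℂ] H_A) Cb S.psi⟫).re := by
        rw [← re_inner_self]
        rw [CHSH_symm S]
        rw [← LinearMap.comp_apply, CHSH_op_sq S, ← hCadef, ← hCbdef]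
        rw [LinearMap.add_apply, LinearMap.smul_apply, LinearMap.id_apply]
        rw [inner_add_right, tensor_inner_smul_right]
        have hsplit : TensorProduct.map Ca Cb S.psi
            = TensorProduct.map Ca (LinearMap.id : H_B →ₗ[ℂ] H_B)
                (TensorProduct.map (LinearMap.id : H_A →ₗ[ℂ] H_A) Cb S.psi) := by
          rw [← LinearMap.comp_apply, ← map_split]
        rw [hsplit]
        have hadj := inner_map_adjoint (-Ca) Ca (LinearMap.id : H_B →ₗ[ℂ] H_B) LinearMap.id
          (comm_antisymm S.A1_bin S.A0_bin) ipidB S.psi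
          (TensorProduct.map (LinearMap.id : H_A →ₗ[ℂ] H_A) Cb S.psi)
        rw [← hadj, map_neg_id, LinearMap.neg_apply, tensor_inner_neg_left]
        have hψ2 : ⟪S.psi, S.psi⟫ = 1 := by
          rw [inner_self_eq_norm_sq_to_K, hψ]; norm_num
        rw [hψ2]
        simp only [Complex.add_re, Complex.neg_re, Complex.one_re, Complex.re_ofNat, mul_one]
        ring
      -- bound on u
      have hub : ‖TensorProduct.map Ca (LinearMap.id : H_B →ₗ[ℂ] H_B) S.psi‖ ≤ 2 := by
        rw [hCadef, map_sub_id, LinearMap.sub_apply]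
        have e1 : ‖TensorProduct.map (S.A1 ∘ₗ S.A0) (LinearMap.id : H_B →ₗ[ℂ] H_B) S.psi‖
            = 1 := by
          have hip : ∀ a c : H_A, ⟪(S.A1 ∘ₗ S.A0) a, (S.A1 ∘ₗ S.A0) c⟫ = ⟪a, c⟫ := by
            intro a c
            rw [LinearMap.comp_apply, LinearMap.comp_apply, binObs_ip S.A1_bin,
              binObs_ip S.A0_bin]
          rw [norm_map_map _ _ hip ipidB, hψ]
        have e2 : ‖TensorProduct.map (S.A0 ∘ₗ S.A1) (LinearMap.id : H_B →ₗ[ℂ] H_B) S.psi‖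
            = 1 := by
          have hip : ∀ a c : H_A, ⟪(S.A0 ∘ₗ S.A1) a, (S.A0 ∘ₗ S.A1) c⟫ = ⟪a, c⟫ := by
            intro a c
            rw [LinearMap.comp_apply, LinearMap.comp_apply, binObs_ip S.A0_bin,
              binObs_ip S.A1_bin]
          rw [norm_map_map _ _ hip ipidB, hψ]
        calc _ ≤ _ := norm_sub_le _ _
          _ ≤ (2:ℝ) := by rw [e1, e2]; norm_num
      have hre : -(⟪TensorProduct.map Ca (LinearMap.id : H_B →ₗ[ℂ] H_B) S.psi,
          TensorProduct.map (LinearMap.id : H_A →ₗ[ℂ] H_A) Cb S.psi⟫).re ≤ 2 * vn := by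
        have h1 : -(⟪TensorProduct.map Ca (LinearMap.id : H_B →ₗ[ℂ] H_B) S.psi,
            TensorProduct.map (LinearMap.id : H_A →ₗ[ℂ] H_A) Cb S.psi⟫).re
            ≤ ‖⟪TensorProduct.map Ca (LinearMap.id : H_B →ₗ[ℂ] H_B) S.psi,
              TensorProduct.map (LinearMap.id : H_A →ₗ[ℂ] H_A) Cb S.psi⟫‖ := by
          calc -(⟪TensorProduct.map Ca (LinearMap.id : H_B →ₗ[ℂ] H_B) S.psi,
              TensorProduct.map (LinearMap.id : H_A →ₗ[ℂ] H_A) Cb S.psi⟫).re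
              ≤ |(⟪TensorProduct.map Ca (LinearMap.id : H_B →ₗ[ℂ] H_B) S.psi,
                TensorProduct.map (LinearMap.id : H_A →ₗ[ℂ] H_A) Cb S.psi⟫).re| :=
                neg_le_abs _
            _ ≤ _ := Complex.abs_re_le_norm _
        calc _ ≤ _ := h1
          _ ≤ ‖TensorProduct.map Ca (LinearMap.id : H_B →ₗ[ℂ] H_B) S.psi‖ * vn :=
            norm_inner_le_norm _ _
          _ ≤ 2 * vn := mul_le_mul_of_nonneg_right hub vnn
      -- combine
      have hvn : 2 - 2 * Real.sqrt 2 * ε ≤ vn := by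
        nlinarith [hWsq, hW2, hre, sqrt2_mul_self, hε]
      have h2e : (0:ℝ) ≤ 2 - 2 * Real.sqrt 2 * ε := by nlinarith [hcase]
      have hvsq : (2 - 2 * Real.sqrt 2 * ε)^2 ≤ vn^2 := pow_le_pow_left₀ h2e hvn 2
      rw [hcc]
      nlinarith [hvsq, step2, sqrt2_mul_self, hε, Real.sqrt_nonneg 2]
    · -- trivial case
      push_neg at hcase
      have ht4 : t^2 ≤ 4 := by nlinarith [step2, sq_nonneg vn]
      rw [hcc]
      nlinarith [hcase, Real.sqrt_nonneg 2, hε]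
  -- conclude
  calc ‖(TensorProduct.map (LinearMap.id : H_A →ₗ[ℂ] H_A)
        ((TensorProduct.map HadamardPrime (LinearMap.id : H_B →ₗ[ℂ] H_B)) ∘ₗ VB S.B0 S.B1
          - VB S.B0 S.B1 ∘ₗ S.B1)) S.psi‖ ≤ t := step1
    _ = Real.sqrt (t^2) := (Real.sqrt_sq tnn).symm
    _ ≤ Real.sqrt (cConst * ε) := Real.sqrt_le_sqrt step3

end LocalInner

/-- **Approximate intertwining for `B1`.** -/
theorem B1_approx_intertwine
    {H_A H_B : Type*}
    [NormedAddCommGroup H_A] [InnerProductSpace ℂ H_A] [FiniteDimensional ℂ H_A]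
    [NormedAddCommGroup H_B] [InnerProductSpace ℂ H_B] [FiniteDimensional ℂ H_B]
    (S : CHSHStrategy H_A H_B) (ε : ℝ) (hε : 0 ≤ ε)
    (hBias : chshBias S ≥ 2 * Real.sqrt 2 - ε) :
    ‖(TensorProduct.map (LinearMap.id : H_A →ₗ[ℂ] H_A)
        ((TensorProduct.map HadamardPrime (LinearMap.id : H_B →ₗ[ℂ] H_B)) ∘ₗ VB S.B0 S.B1
          - VB S.B0 S.B1 ∘ₗ S.B1)) S.psi‖ ≤ Real.sqrt (cConst * ε) := by
  exact B1_approx_intertwine_aux S ε hε hBias
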